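/- Let $c > 0$ and $\epsilon > 0$. Then there exists $\delta > 0$ such that, with probability tending to $1$ as $n \to \infty$, the Erdős–Rényi random graph $G \in \mathcal{G}(n, c/n)$ has the property that every vertex set $T$ with $|T| \le \delta n$ spans at most $(1+\epsilon/3)|T|$ edges. -/

import Mathlib

open SimpleGraph Filter
open scoped Classical

/-- The probability, in the Erdős–Rényi model `𝒢(n, p)` (each of the `n.choose 2` possible
edges present independently with probability `p`), that the random graph lies in the set
`A` of graphs on `{1, …, n}`. -/
noncomputable def erProb (n : ℕ) (p : ℝ) (A : Set (SimpleGraph (Fin n))) : ℝ :=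
  ∑ G : SimpleGraph (Fin n),
    A.indicator (fun G => p ^ G.edgeSet.ncard * (1 - p) ^ (n.choose 2 - G.edgeSet.ncard)) G

open Finset in
private lemma sum_pow_card {α : Type*} [DecidableEq α] (F : Finset α) (p q : ℝ) :
    ∑ S ∈ F.powerset, p ^ S.card * q ^ (F.card - S.card) = (p + q) ^ F.card := by
  have h := Finset.prod_add (fun _ : α => p) (fun _ : α => q) F
  simp only [Finset.prod_const] at h
  rw [h]
  refine Finset.sum_congr rfl fun S hS => ?_
  rw [Finset.card_sdiff_of_subset (Finset.mem_powerset.1 hS)]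

private lemma sum_graphs_eq {n : ℕ} (F : Finset (Sym2 (Fin n)) → ℝ) :
    ∑ G : SimpleGraph (Fin n), F G.edgeFinset
      = ∑ S ∈ (⊤ : SimpleGraph (Fin n)).edgeFinset.powerset, F S := by
  refine Finset.sum_nbij' (fun G => G.edgeFinset) (fun S => SimpleGraph.fromEdgeSet ↑S)
    ?_ ?_ ?_ ?_ ?_
  · intro G _
    simp only [Finset.mem_powerset]
    exact SimpleGraph.edgeFinset_mono le_top
  · intro S _; exact Finset.mem_univ _
  · intro G _
    simp only [SimpleGraph.coe_edgeFinset, SimpleGraph.fromEdgeSet_edgeSet]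
  · intro S hS
    apply Finset.coe_injective
    rw [SimpleGraph.coe_edgeFinset, SimpleGraph.edgeSet_fromEdgeSet]
    ext e
    simp only [Set.mem_diff, Set.mem_setOf_eq, Finset.mem_coe, and_iff_left_iff_imp]
    intro he hd
    exact (⊤ : SimpleGraph (Fin n)).not_isDiag_of_mem_edgeSet
      (SimpleGraph.mem_edgeFinset.1 (Finset.mem_powerset.1 hS he)) hd
  · intro G _; rfl

private lemma edgeSet_ncard_eq {n : ℕ} (G : SimpleGraph (Fin n)) :
    G.edgeSet.ncard = G.edgeFinset.card := by
  rw [← SimpleGraph.coe_edgeFinset, Set.ncard_coe_finset]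

private lemma card_top_edges (n : ℕ) :
    (⊤ : SimpleGraph (Fin n)).edgeFinset.card = n.choose 2 := by
  rw [SimpleGraph.card_edgeFinset_top_eq_card_choose_two, Fintype.card_fin]

private lemma erProb_eq_sum_F {n : ℕ} (p : ℝ) (A : Set (SimpleGraph (Fin n)))
    (F : Finset (Sym2 (Fin n)) → ℝ)
    (hF : ∀ G : SimpleGraph (Fin n),
      A.indicator (fun G => p ^ G.edgeSet.ncard * (1 - p) ^ (n.choose 2 - G.edgeSet.ncard)) G
        = F G.edgeFinset) :
    erProb n p A = ∑ S ∈ (⊤ : SimpleGraph (Fin n)).edgeFinset.powerset, F S := by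
  rw [erProb, ← sum_graphs_eq]
  exact Finset.sum_congr rfl fun G _ => hF G

private lemma erProb_univ {n : ℕ} (p : ℝ) : erProb n p Set.univ = 1 := by
  rw [erProb_eq_sum_F p Set.univ
    (fun S => p ^ S.card * (1 - p) ^ (n.choose 2 - S.card))
    (fun G => by rw [Set.indicator_univ, edgeSet_ncard_eq])]
  rw [← card_top_edges n, sum_pow_card]
  simp

private lemma weight_nonneg {n : ℕ} {p : ℝ} (hp0 : 0 ≤ p) (hp1 : p ≤ 1)
    (G : SimpleGraph (Fin n)) :
    0 ≤ p ^ G.edgeSet.ncard * (1 - p) ^ (n.choose 2 - G.edgeSet.ncard) :=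
  mul_nonneg (pow_nonneg hp0 _) (pow_nonneg (by linarith) _)

private lemma erProb_nonneg {n : ℕ} {p : ℝ} (hp0 : 0 ≤ p) (hp1 : p ≤ 1)
    (A : Set (SimpleGraph (Fin n))) : 0 ≤ erProb n p A :=
  Finset.sum_nonneg fun G _ => Set.indicator_nonneg (fun G _ => weight_nonneg hp0 hp1 G) G

private lemma erProb_mono {n : ℕ} {p : ℝ} (hp0 : 0 ≤ p) (hp1 : p ≤ 1)
    {A B : Set (SimpleGraph (Fin n))} (hAB : A ⊆ B) : erProb n p A ≤ erProb n p B :=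
  Finset.sum_le_sum fun G _ =>
    Set.indicator_le_indicator_of_subset hAB (fun G => weight_nonneg hp0 hp1 G) G

private lemma erProb_le_one {n : ℕ} {p : ℝ} (hp0 : 0 ≤ p) (hp1 : p ≤ 1)
    (A : Set (SimpleGraph (Fin n))) : erProb n p A ≤ 1 := by
  rw [← erProb_univ (n := n) p]
  exact erProb_mono hp0 hp1 (Set.subset_univ A)

private lemma erProb_add_compl {n : ℕ} (p : ℝ) (A : Set (SimpleGraph (Fin n))) :
    erProb n p A + erProb n p Aᶜ = 1 := by
  have h : erProb n p A + erProb n p Aᶜ = erProb n p Set.univ := by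
    rw [erProb, erProb, erProb, ← Finset.sum_add_distrib]
    refine Finset.sum_congr rfl fun G _ => ?_
    rw [Set.indicator_of_mem (Set.mem_univ G)]
    exact congrFun (Set.indicator_self_add_compl A _) G
  rw [h, erProb_univ]

private lemma erProb_le_sum {n : ℕ} {p : ℝ} (hp0 : 0 ≤ p) (hp1 : p ≤ 1)
    {ι : Type*} (I : Finset ι) (A : ι → Set (SimpleGraph (Fin n)))
    {B : Set (SimpleGraph (Fin n))} (hB : B ⊆ ⋃ i ∈ I, A i) :
    erProb n p B ≤ ∑ i ∈ I, erProb n p (A i) := by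
  unfold erProb
  rw [Finset.sum_comm]
  refine Finset.sum_le_sum fun G _ => ?_
  set w : SimpleGraph (Fin n) → ℝ :=
    fun G => p ^ G.edgeSet.ncard * (1 - p) ^ (n.choose 2 - G.edgeSet.ncard) with hw
  by_cases hG : G ∈ B
  · obtain ⟨i, hi, hGi⟩ := Set.mem_iUnion₂.1 (hB hG)
    have h1 : B.indicator w G = w G := Set.indicator_of_mem hG w
    have h2 : (A i).indicator w G = w G := Set.indicator_of_mem hGi w
    have h3 : ∀ j ∈ I, 0 ≤ (A j).indicator w G := fun j _ =>
      Set.indicator_nonneg (fun G _ => weight_nonneg hp0 hp1 G) G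
    have h4 := Finset.single_le_sum h3 hi
    rw [h1, ← h2]
    exact h4
  · rw [Set.indicator_of_notMem hG]
    exact Finset.sum_nonneg fun j _ =>
      Set.indicator_nonneg (fun G _ => weight_nonneg hp0 hp1 G) G

private lemma erProb_edges {n : ℕ} (p : ℝ) (S : Finset (Sym2 (Fin n)))
    (hS : S ⊆ (⊤ : SimpleGraph (Fin n)).edgeFinset) :
    erProb n p {G | ↑S ⊆ G.edgeSet} = p ^ S.card := by
  classical
  rw [erProb_eq_sum_F p _
    (fun U => if S ⊆ U then p ^ U.card * (1 - p) ^ (n.choose 2 - U.card) else 0)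
    (fun G => by
      have hiff : ((S : Set (Sym2 (Fin n))) ⊆ G.edgeSet) ↔ S ⊆ G.edgeFinset := by
        rw [← SimpleGraph.coe_edgeFinset, Finset.coe_subset]
      by_cases h : S ⊆ G.edgeFinset
      · have hmem : G ∈ {G : SimpleGraph (Fin n) | ↑S ⊆ G.edgeSet} := hiff.mpr h
        rw [Set.indicator_of_mem hmem]
        simp only [h, if_true, edgeSet_ncard_eq]
      · have hnm : G ∉ {G : SimpleGraph (Fin n) | ↑S ⊆ G.edgeSet} :=
          fun hc => h (hiff.mp hc)
        rw [Set.indicator_of_notMem hnm]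
        simp only [h, if_false])]
  rw [Finset.sum_ite, Finset.sum_const_zero, add_zero]
  have key : ∀ V ∈ ((⊤ : SimpleGraph (Fin n)).edgeFinset \ S).powerset,
      p ^ (S ∪ V).card * (1 - p) ^ (n.choose 2 - (S ∪ V).card)
        = p ^ S.card * (p ^ V.card
            * (1 - p) ^ (((⊤ : SimpleGraph (Fin n)).edgeFinset \ S).card - V.card)) := by
    intro V hV
    have hVsub := Finset.mem_powerset.1 hV
    have hdisj : Disjoint S V := by
      refine Finset.disjoint_left.2 fun e heS heV => ?_
      exact (Finset.mem_sdiff.1 (hVsub heV)).2 heS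
    have hexp : n.choose 2 - (S.card + V.card)
        = ((⊤ : SimpleGraph (Fin n)).edgeFinset \ S).card - V.card := by
      rw [Finset.card_sdiff_of_subset hS, ← card_top_edges n]
      omega
    rw [Finset.card_union_of_disjoint hdisj, pow_add, mul_assoc, hexp]
  have reindex : ∑ U ∈ (Finset.filter (fun U => S ⊆ U)
        (⊤ : SimpleGraph (Fin n)).edgeFinset.powerset),
      p ^ U.card * (1 - p) ^ (n.choose 2 - U.card)
      = ∑ V ∈ ((⊤ : SimpleGraph (Fin n)).edgeFinset \ S).powerset,
          p ^ (S ∪ V).card * (1 - p) ^ (n.choose 2 - (S ∪ V).card) := by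
    refine Finset.sum_nbij' (fun U => U \ S) (fun V => S ∪ V) ?_ ?_ ?_ ?_ ?_
    · intro U hU
      rw [Finset.mem_filter, Finset.mem_powerset] at hU
      rw [Finset.mem_powerset]
      exact Finset.sdiff_subset_sdiff hU.1 le_rfl
    · intro V hV
      rw [Finset.mem_powerset] at hV
      rw [Finset.mem_filter, Finset.mem_powerset]
      exact ⟨Finset.union_subset hS fun e he => (Finset.mem_sdiff.1 (hV he)).1,
        Finset.subset_union_left⟩
    · intro U hU
      rw [Finset.mem_filter] at hU
      show S ∪ U \ S = U
      exact Finset.union_sdiff_of_subset hU.2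
    · intro V hV
      rw [Finset.mem_powerset] at hV
      show (S ∪ V) \ S = V
      refine Finset.union_sdiff_cancel_left ?_
      refine Finset.disjoint_left.2 fun e heS heV => ?_
      exact (Finset.mem_sdiff.1 (hV heV)).2 heS
    · intro U hU
      rw [Finset.mem_filter] at hU
      show _ = p ^ (S ∪ U \ S).card * (1 - p) ^ (n.choose 2 - (S ∪ U \ S).card)
      rw [Finset.union_sdiff_of_subset hU.2]
  rw [reindex, Finset.sum_congr rfl key, ← Finset.mul_sum, sum_pow_card]
  simp

private def pairsIn {n : ℕ} (T : Finset (Fin n)) : Finset (Sym2 (Fin n)) :=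
  Finset.univ.filter (fun e => ¬ e.IsDiag ∧ ∀ v ∈ e, v ∈ T)

private lemma mem_pairsIn {n : ℕ} {T : Finset (Fin n)} {e : Sym2 (Fin n)} :
    e ∈ pairsIn T ↔ ¬ e.IsDiag ∧ ∀ v ∈ e, v ∈ T := by
  simp [pairsIn]

private lemma pairsIn_subset_top {n : ℕ} (T : Finset (Fin n)) :
    pairsIn T ⊆ (⊤ : SimpleGraph (Fin n)).edgeFinset := by
  intro e he
  rw [SimpleGraph.mem_edgeFinset, SimpleGraph.edgeSet_top]
  exact (mem_pairsIn.1 he).1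

private lemma card_pairsIn_le {n : ℕ} (T : Finset (Fin n)) :
    (pairsIn T).card ≤ T.card ^ 2 := by
  have hsub : pairsIn T ⊆ (T ×ˢ T).image (fun x => s(x.1, x.2)) := by
    intro e he
    rw [mem_pairsIn] at he
    induction e with
    | _ u v =>
      refine Finset.mem_image.2 ⟨(u, v), ?_, rfl⟩
      rw [Finset.mem_product]
      exact ⟨he.2 u (Sym2.mem_mk_left u v), he.2 v (Sym2.mem_mk_right u v)⟩
  calc (pairsIn T).card ≤ ((T ×ˢ T).image (fun x => s(x.1, x.2))).card :=
        Finset.card_le_card hsub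
  _ ≤ (T ×ˢ T).card := Finset.card_image_le
  _ = T.card ^ 2 := by rw [Finset.card_product, sq]

private lemma pairsIn_card_small {n : ℕ} {T : Finset (Fin n)} (hT : T.card ≤ 2) :
    (pairsIn T).card ≤ 1 := by
  rw [Finset.card_le_one]
  intro e he f hf
  rw [mem_pairsIn] at he hf
  induction e with
  | _ a b =>
    induction f with
    | _ x y =>
      have hab : a ≠ b := fun h => he.1 (by simp [h])
      have hxy : x ≠ y := fun h => hf.1 (by simp [h])
      have haT := he.2 a (Sym2.mem_mk_left a b)
      have hbT := he.2 b (Sym2.mem_mk_right a b)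
      have hxT := hf.2 x (Sym2.mem_mk_left x y)
      have hyT := hf.2 y (Sym2.mem_mk_right x y)
      -- a,b,x,y ∈ T, |T| ≤ 2, a≠b, x≠y ⇒ {a,b} = {x,y} = T
      have h1 : ({a, b} : Finset (Fin n)) ⊆ T := by
        intro z hz; rcases Finset.mem_insert.1 hz with rfl | hz
        · exact haT
        · rw [Finset.mem_singleton] at hz; subst hz; exact hbT
      have h2 : ({x, y} : Finset (Fin n)) ⊆ T := by
        intro z hz; rcases Finset.mem_insert.1 hz with rfl | hz
        · exact hxT
        · rw [Finset.mem_singleton] at hz; subst hz; exact hyT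
      have hc1 : ({a, b} : Finset (Fin n)).card = 2 := Finset.card_pair hab
      have hc2 : ({x, y} : Finset (Fin n)).card = 2 := Finset.card_pair hxy
      have he1 : ({a, b} : Finset (Fin n)) = T :=
        Finset.eq_of_subset_of_card_le h1 (by omega)
      have he2 : ({x, y} : Finset (Fin n)) = T :=
        Finset.eq_of_subset_of_card_le h2 (by omega)
      have : ({a, b} : Finset (Fin n)) = {x, y} := he1.trans he2.symm
      have hax : a ∈ ({x, y} : Finset (Fin n)) := this ▸ Finset.mem_insert_self a {b}
      have hbx : b ∈ ({x, y} : Finset (Fin n)) := this ▸ by simp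
      simp only [Finset.mem_insert, Finset.mem_singleton] at hax hbx
      rcases hax with rfl | rfl
      · rcases hbx with rfl | rfl
        · exact absurd rfl hab
        · rfl
      · rcases hbx with rfl | rfl
        · exact Sym2.eq_swap
        · exact absurd rfl hab

private lemma pairsIn_eq_empty {n : ℕ} {T : Finset (Fin n)} (hT : T.card ≤ 1) :
    pairsIn T = ∅ := by
  rw [Finset.eq_empty_iff_forall_notMem]
  intro e he
  rw [mem_pairsIn] at he
  induction e with
  | _ u v =>
    have hu : u ≠ v := fun h => he.1 (by simp [h])
    have huT := he.2 u (Sym2.mem_mk_left u v)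
    have hvT := he.2 v (Sym2.mem_mk_right u v)
    have hc2 : ({u, v} : Finset (Fin n)).card = 2 := Finset.card_pair hu
    have hsub : ({u, v} : Finset (Fin n)) ⊆ T := by
      intro z hz
      rcases Finset.mem_insert.1 hz with rfl | hz
      · exact huT
      · rw [Finset.mem_singleton] at hz
        subst hz
        exact hvT
    have := Finset.card_le_card hsub
    omega

/-- main inclusion: a graph with a dense small set has `K` specific edges inside
a small vertex set. -/
private lemma bad_subset {n : ℕ} (δ a : ℝ) (ha : 0 ≤ a) (K : ℕ → ℕ)
    (hK : ∀ t : ℕ, K t = ⌊a * t⌋₊ + 1) :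
    {G : SimpleGraph (Fin n) | ∃ T : Set (Fin n), (T.ncard : ℝ) ≤ δ * n ∧
        a * T.ncard < ((G.induce T).edgeSet.ncard : ℝ)}
      ⊆ ⋃ T ∈ Finset.univ.filter (fun T : Finset (Fin n) => (T.card : ℝ) ≤ δ * n),
          ⋃ S ∈ (pairsIn T).powerset.filter (fun S => S.card = K T.card),
            {G : SimpleGraph (Fin n) | ↑S ⊆ G.edgeSet} := by
  intro G hG
  obtain ⟨T, hTcard, hTdense⟩ := hG
  set T' : Finset (Fin n) := T.toFinset with hT'
  have hT'card : T'.card = T.ncard := (Set.ncard_eq_toFinset_card' T).symm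
  -- the image of the induced edge set
  have hinj : Function.Injective (Sym2.map (Subtype.val : T → Fin n)) :=
    Sym2.map.injective Subtype.coe_injective
  set E' : Set (Sym2 (Fin n)) := (Sym2.map (Subtype.val : T → Fin n)) '' (G.induce T).edgeSet
    with hE'
  have hE'card : E'.ncard = (G.induce T).edgeSet.ncard :=
    Set.ncard_image_of_injective _ hinj
  have hE'sub : E' ⊆ G.edgeSet := by
    rintro _ ⟨e, he, rfl⟩
    induction e with
    | _ u v =>
      simp only [Sym2.map_pair_eq, SimpleGraph.mem_edgeSet] at he ⊢
      exact he
  have hE'fin : E'.Finite := Set.toFinite _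
  have hF'card : hE'fin.toFinset.card = (G.induce T).edgeSet.ncard := by
    rw [← Set.ncard_eq_toFinset_card _ hE'fin, hE'card]
  -- e(T) ≥ K |T|
  have hKle : K T'.card ≤ hE'fin.toFinset.card := by
    rw [hF'card, hK, hT'card]
    have h0 : 0 ≤ a * (T.ncard : ℝ) := mul_nonneg ha (Nat.cast_nonneg _)
    have := (Nat.floor_lt h0).2 hTdense
    omega
  obtain ⟨S, hSsub, hScard⟩ := Finset.exists_subset_card_eq hKle
  refine Set.mem_iUnion₂.2 ⟨T', ?_, Set.mem_iUnion₂.2 ⟨S, ?_, ?_⟩⟩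
  · rw [Finset.mem_filter]
    exact ⟨Finset.mem_univ _, by rw [hT'card]; exact hTcard⟩
  · rw [Finset.mem_filter, Finset.mem_powerset]
    refine ⟨?_, hScard⟩
    intro e heS
    have heE' : e ∈ E' := (hE'fin.mem_toFinset).1 (hSsub heS)
    rw [mem_pairsIn]
    constructor
    · exact SimpleGraph.not_isDiag_of_mem_edgeSet G (hE'sub heE')
    · obtain ⟨f, _, rfl⟩ := heE'
      intro v hv
      obtain ⟨w, _, rfl⟩ := Sym2.mem_map.1 hv
      rw [hT', Set.mem_toFinset]
      exact w.2
  · intro e he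
    exact hE'sub ((hE'fin.mem_toFinset).1 (hSsub he))

private lemma pow_self_le_fact (k : ℕ) : (k : ℝ) ^ k ≤ 3 ^ k * (k.factorial : ℝ) := by
  induction k with
  | zero => norm_num
  | succ k ih =>
    have key : ((k : ℝ) + 1) ^ k ≤ 3 * (k : ℝ) ^ k := by
      rcases Nat.eq_zero_or_pos k with rfl | hk
      · norm_num
      · have hk0 : (0 : ℝ) < k := by exact_mod_cast hk
        have h1 : (k : ℝ) + 1 = (k : ℝ) * (1 + 1 / k) := by field_simp
        rw [h1, mul_pow]
        have h2 : (1 + 1 / (k : ℝ)) ^ k ≤ 3 := by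
          have he := Real.add_one_le_exp (1 / (k : ℝ))
          calc (1 + 1 / (k : ℝ)) ^ k ≤ (Real.exp (1 / k)) ^ k := by
                apply pow_le_pow_left₀ (by positivity) (by linarith)
          _ = Real.exp 1 := by
                rw [← Real.exp_nat_mul]
                congr 1
                field_simp
          _ ≤ 3 := by linarith [Real.exp_one_lt_d9]
        calc (k : ℝ) ^ k * (1 + 1 / (k : ℝ)) ^ k ≤ (k : ℝ) ^ k * 3 :=
              mul_le_mul_of_nonneg_left h2 (by positivity)
        _ = 3 * (k : ℝ) ^ k := by ring
    have hfact : (0 : ℝ) ≤ (k.factorial : ℝ) := Nat.cast_nonneg _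
    have h3 : ((k : ℝ) + 1) ^ (k + 1) = ((k : ℝ) + 1) * ((k : ℝ) + 1) ^ k := by ring
    push_cast
    rw [h3]
    calc ((k : ℝ) + 1) * ((k : ℝ) + 1) ^ k ≤ ((k : ℝ) + 1) * (3 * (k : ℝ) ^ k) := by
          apply mul_le_mul_of_nonneg_left key (by positivity)
    _ ≤ ((k : ℝ) + 1) * (3 * (3 ^ k * k.factorial)) := by
          apply mul_le_mul_of_nonneg_left (by linarith) (by positivity)
    _ = 3 ^ (k + 1) * ((k : ℝ) + 1) * k.factorial := by ring
    _ = 3 ^ (k + 1) * (k.factorial * ((k : ℝ) + 1)) := by ring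
    _ = 3 ^ (k + 1) * (((k + 1).factorial : ℝ)) := by
          rw [Nat.factorial_succ]
          push_cast
          ring

private lemma choose_le_bound (m k : ℕ) (hk : 1 ≤ k) :
    (m.choose k : ℝ) ≤ (3 * m / k) ^ k := by
  have hk0 : (0 : ℝ) < k := by exact_mod_cast hk
  have hfact : (0 : ℝ) < (k.factorial : ℝ) := by exact_mod_cast k.factorial_pos
  have h1 : (m.choose k : ℝ) ≤ (m : ℝ) ^ k / k.factorial := Nat.choose_le_pow_div k m
  have h2 := pow_self_le_fact k
  have hinv : ((k.factorial : ℝ))⁻¹ ≤ 3 ^ k / (k : ℝ) ^ k := by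
    have h3 : (k : ℝ) ^ k / 3 ^ k ≤ (k.factorial : ℝ) := by
      rw [div_le_iff₀ (by positivity)]
      linarith
    calc ((k.factorial : ℝ))⁻¹ ≤ ((k : ℝ) ^ k / 3 ^ k)⁻¹ := by
          apply inv_anti₀ (by positivity) h3
    _ = 3 ^ k / (k : ℝ) ^ k := by rw [inv_div]
  calc (m.choose k : ℝ) ≤ (m : ℝ) ^ k / k.factorial := h1
  _ = (m : ℝ) ^ k * ((k.factorial : ℝ))⁻¹ := by rw [div_eq_mul_inv]
  _ ≤ (m : ℝ) ^ k * (3 ^ k / (k : ℝ) ^ k) := by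
        apply mul_le_mul_of_nonneg_left hinv (by positivity)
  _ = (3 * m / k) ^ k := by
        rw [div_pow, mul_pow]
        ring

private lemma nat_le_geom (t : ℕ) : (t : ℝ) ≤ 2 * (3 / 2) ^ t := by
  induction t with
  | zero => norm_num
  | succ t ih =>
    have h1 : (1 : ℝ) ≤ (3 / 2) ^ t := one_le_pow₀ (by norm_num)
    push_cast
    calc (t : ℝ) + 1 ≤ 2 * (3 / 2) ^ t + (3 / 2) ^ t := by linarith
    _ = 2 * (3 / 2) ^ (t + 1) := by ring

private lemma geom_sum_le_four (m : ℕ) : ∑ t ∈ Finset.range m, (3 / 4 : ℝ) ^ t ≤ 4 := by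
  rw [geom_sum_eq (by norm_num)]
  have h := pow_nonneg (by norm_num : (0 : ℝ) ≤ 3 / 4) m
  rw [div_le_iff_of_neg (by norm_num)]
  linarith

private lemma sum_t_half_le (m : ℕ) : ∑ t ∈ Finset.range m, (t : ℝ) * (1 / 2) ^ t ≤ 8 := by
  calc ∑ t ∈ Finset.range m, (t : ℝ) * (1 / 2) ^ t
      ≤ ∑ t ∈ Finset.range m, 2 * (3 / 4 : ℝ) ^ t := by
        refine Finset.sum_le_sum fun t _ => ?_
        calc (t : ℝ) * (1 / 2) ^ t ≤ 2 * (3 / 2) ^ t * (1 / 2) ^ t := by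
              apply mul_le_mul_of_nonneg_right (nat_le_geom t) (by positivity)
        _ = 2 * (3 / 4) ^ t := by
              rw [mul_assoc, ← mul_pow]
              norm_num
  _ = 2 * ∑ t ∈ Finset.range m, (3 / 4 : ℝ) ^ t := by rw [Finset.mul_sum]
  _ ≤ 2 * 4 := by linarith [geom_sum_le_four m]
  _ = 8 := by norm_num

private lemma term_bound
    {c ε a C₀ δ s : ℝ} (hc : 0 < c) (hε : 0 < ε)
    (ha : a = 1 + ε / 3)
    (hC₀ : C₀ = 3 * (3 * c / a) ^ a)
    (hδ0 : 0 < δ) (hδa : 3 * c * δ ≤ a) (hδhalf : C₀ * δ ^ (ε / 3) ≤ 1 / 2) (hδ1 : δ ≤ 1)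
    (hs : s = min ε 1)
    {n t K : ℕ} (hn : 1 ≤ n) (ht3 : 3 ≤ t) (htM : (t : ℝ) ≤ δ * n)
    (hKt : a * t ≤ (K : ℝ)) :
    (n.choose t : ℝ) * ((t ^ 2).choose K : ℝ) * (c / n) ^ K
      ≤ 8 * C₀ ^ 3 * ((t : ℝ) / (n : ℝ) ^ s) * (1 / 2) ^ t := by
  have ha1 : (1 : ℝ) < a := by rw [ha]; linarith
  have ha0 : (0 : ℝ) < a := by linarith
  have htpos : (0 : ℝ) < t := by
    have : (3 : ℝ) ≤ t := by exact_mod_cast ht3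
    linarith
  have hnpos : (0 : ℝ) < n := by exact_mod_cast hn
  have ht3' : (3 : ℝ) ≤ (t : ℝ) := by exact_mod_cast ht3
  have ht1 : (1 : ℝ) ≤ (t : ℝ) := by linarith
  have hK3 : (3 : ℝ) ≤ (K : ℝ) := by
    have h1 : a * 3 ≤ a * t := mul_le_mul_of_nonneg_left ht3' (le_of_lt ha0)
    nlinarith
  have hK1 : 1 ≤ K := by exact_mod_cast le_trans (by norm_num : (1:ℝ) ≤ 3) hK3
  have hKpos : (0 : ℝ) < K := by linarith
  have hp0 : (0 : ℝ) < c / n := by positivity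
  -- binomial bounds
  have hb1 : (n.choose t : ℝ) ≤ (3 * n / t) ^ t := choose_le_bound n t (by omega)
  have hb2 : ((t ^ 2).choose K : ℝ) ≤ (3 * (t ^ 2 : ℕ) / K) ^ K := choose_le_bound _ K hK1
  have hcast : ((t ^ 2 : ℕ) : ℝ) = (t : ℝ) ^ 2 := by push_cast; ring
  set x : ℝ := 3 * (t : ℝ) ^ 2 / K * (c / n) with hxdef
  have hx0 : 0 < x := by positivity
  set y : ℝ := 3 * c / a * ((t : ℝ) / n) with hydef
  have hy0 : 0 < y := by positivity
  have hxy : x ≤ y := by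
    rw [hxdef, hydef]
    rw [div_mul_div_comm, div_mul_div_comm, div_le_div_iff₀ (by positivity) (by positivity)]
    have h1 : 3 * (t:ℝ)^2 * c * (a * n) = (3 * c * (t:ℝ) * n) * (a * t) := by ring
    have h2 : 3 * c * (t:ℝ) * ((K:ℝ) * n) = (3 * c * (t:ℝ) * n) * K := by ring
    rw [h1, h2]
    apply mul_le_mul_of_nonneg_left hKt (by positivity)
  have hy1 : y ≤ 1 := by
    rw [hydef, div_mul_div_comm, div_le_one (by positivity)]
    nlinarith
  have hx1 : x ≤ 1 := hxy.trans hy1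
  -- step: combine
  have step1 : (n.choose t : ℝ) * ((t ^ 2).choose K : ℝ) * (c / n) ^ K
      ≤ (3 * n / t) ^ t * x ^ K := by
    have h1 : ((t ^ 2).choose K : ℝ) * (c / n) ^ K ≤ x ^ K := by
      rw [hxdef, mul_pow]
      apply mul_le_mul_of_nonneg_right _ (by positivity)
      rw [← hcast]
      exact hb2
    rw [mul_assoc]
    apply mul_le_mul (le_trans hb1 le_rfl) h1 (by positivity) (by positivity)
  -- step: x^K ≤ y^(a*t)
  have step2 : x ^ K ≤ y ^ (a * t) := by
    have e1 : x ^ K = x ^ ((K : ℝ) : ℝ) := by rw [Real.rpow_natCast]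
    rw [e1]
    calc x ^ ((K : ℝ) : ℝ) ≤ x ^ (a * t) :=
          Real.rpow_le_rpow_of_exponent_ge hx0 hx1 hKt
    _ ≤ y ^ (a * t) := Real.rpow_le_rpow (le_of_lt hx0) hxy (by positivity)
  -- base computation
  set base : ℝ := C₀ * ((t : ℝ) / n) ^ (ε / 3) with hbase
  have hbase_eq : (3 * n / t) * (y ^ a) = base := by
    rw [hydef, hbase, hC₀, Real.mul_rpow (by positivity) (by positivity)]
    have e2 : ((t : ℝ) / n) ^ a = ((t : ℝ) / n) * ((t : ℝ) / n) ^ (ε / 3) := by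
      rw [ha, Real.rpow_add (by positivity), Real.rpow_one]
    rw [e2]
    have e3 : 3 * (n : ℝ) / t * ((t : ℝ) / n) = 3 := by field_simp
    calc 3 * (n : ℝ) / t * ((3 * c / a) ^ a * ((t : ℝ) / n * ((t : ℝ) / n) ^ (ε / 3)))
        = (3 * (n : ℝ) / t * ((t : ℝ) / n)) * ((3 * c / a) ^ a * ((t : ℝ) / n) ^ (ε / 3)) := by
          ring
    _ = 3 * ((3 * c / a) ^ a * ((t : ℝ) / n) ^ (ε / 3)) := by rw [e3]
    _ = 3 * (3 * c / a) ^ a * ((t : ℝ) / n) ^ (ε / 3) := by ring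
  have step3 : (3 * n / t) ^ t * y ^ (a * t) = base ^ t := by
    have e4 : y ^ (a * t) = (y ^ a) ^ (t : ℕ) := by
      rw [Real.rpow_mul (le_of_lt hy0), ← Real.rpow_natCast (y ^ a) t]
    rw [e4, ← mul_pow, hbase_eq]
  -- base bounds
  have htn1 : (t : ℝ) / n ≤ δ := by
    rw [div_le_iff₀ hnpos]
    linarith
  have htn0 : 0 < (t : ℝ) / n := by positivity
  have htnle1 : (t : ℝ) / n ≤ 1 := le_trans htn1 hδ1
  have hC₀0 : 0 < C₀ := by
    rw [hC₀]
    positivity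
  have hbase_half : base ≤ 1 / 2 := by
    rw [hbase]
    calc C₀ * ((t : ℝ) / n) ^ (ε / 3) ≤ C₀ * δ ^ (ε / 3) := by
          apply mul_le_mul_of_nonneg_left
            (Real.rpow_le_rpow (le_of_lt htn0) htn1 (by positivity)) (le_of_lt hC₀0)
    _ ≤ 1 / 2 := hδhalf
  have hbase0 : 0 ≤ base := by
    rw [hbase]
    positivity
  -- final chain
  have hsε : s ≤ ε := by rw [hs]; exact min_le_left _ _
  have hs1 : s ≤ 1 := by rw [hs]; exact min_le_right _ _
  have hs0 : 0 < s := by rw [hs]; exact lt_min hε one_pos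
  have hfin : base ^ t ≤ C₀ ^ 3 * ((t : ℝ) / (n : ℝ) ^ s) * (8 * (1 / 2) ^ t) := by
    have ht' : 3 + (t - 3) = t := by omega
    have e5 : base ^ t = base ^ 3 * base ^ (t - 3) := by rw [← pow_add, ht']
    have e6 : base ^ (t - 3) ≤ (1 / 2) ^ (t - 3) := pow_le_pow_left₀ hbase0 hbase_half _
    have e7 : (1 / 2 : ℝ) ^ (t - 3) = 8 * (1 / 2) ^ t := by
      have : (1 / 2 : ℝ) ^ t = (1 / 2) ^ 3 * (1 / 2) ^ (t - 3) := by rw [← pow_add, ht']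
      rw [this]
      ring
    have e8 : base ^ 3 ≤ C₀ ^ 3 * ((t : ℝ) / (n : ℝ) ^ s) := by
      rw [hbase, mul_pow]
      apply mul_le_mul_of_nonneg_left _ (by positivity)
      have e9 : (((t : ℝ) / n) ^ (ε / 3)) ^ (3 : ℕ) = ((t : ℝ) / n) ^ ε := by
        rw [← Real.rpow_natCast (((t : ℝ) / n) ^ (ε / 3)) 3, ← Real.rpow_mul (le_of_lt htn0)]
        norm_num
      rw [e9]
      calc ((t : ℝ) / n) ^ ε ≤ ((t : ℝ) / n) ^ s :=
            Real.rpow_le_rpow_of_exponent_ge htn0 htnle1 hsε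
      _ = (t : ℝ) ^ s / (n : ℝ) ^ s := Real.div_rpow (by positivity) (by positivity) s
      _ ≤ (t : ℝ) / (n : ℝ) ^ s := by
            gcongr
            calc (t : ℝ) ^ s ≤ (t : ℝ) ^ (1 : ℝ) :=
                  Real.rpow_le_rpow_of_exponent_le ht1 hs1
            _ = (t : ℝ) := Real.rpow_one _
    calc base ^ t = base ^ 3 * base ^ (t - 3) := e5
    _ ≤ base ^ 3 * (1 / 2) ^ (t - 3) := by
          apply mul_le_mul_of_nonneg_left e6 (by positivity)
    _ = base ^ 3 * (8 * (1 / 2) ^ t) := by rw [e7]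
    _ ≤ C₀ ^ 3 * ((t : ℝ) / (n : ℝ) ^ s) * (8 * (1 / 2) ^ t) := by
          apply mul_le_mul_of_nonneg_right e8 (by positivity)
  calc (n.choose t : ℝ) * ((t ^ 2).choose K : ℝ) * (c / n) ^ K
      ≤ (3 * n / t) ^ t * x ^ K := step1
  _ ≤ (3 * n / t) ^ t * y ^ (a * t) := by
        apply mul_le_mul_of_nonneg_left step2 (by positivity)
  _ = base ^ t := step3
  _ ≤ C₀ ^ 3 * ((t : ℝ) / (n : ℝ) ^ s) * (8 * (1 / 2) ^ t) := hfin
  _ = 8 * C₀ ^ 3 * ((t : ℝ) / (n : ℝ) ^ s) * (1 / 2) ^ t := by ring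

/-- The main per-n estimate. -/
private lemma master
    {c ε a C₀ δ s : ℝ} (hc : 0 < c) (hε : 0 < ε)
    (ha : a = 1 + ε / 3)
    (hC₀ : C₀ = 3 * (3 * c / a) ^ a)
    (hδ0 : 0 < δ) (hδa : 3 * c * δ ≤ a) (hδhalf : C₀ * δ ^ (ε / 3) ≤ 1 / 2) (hδ1 : δ ≤ 1)
    (hs : s = min ε 1)
    (n : ℕ) (hn : 1 ≤ n) (hcn : c ≤ n) :
    erProb n (c / n) {G : SimpleGraph (Fin n) | ∃ T : Set (Fin n), (T.ncard : ℝ) ≤ δ * n ∧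
        a * T.ncard < ((G.induce T).edgeSet.ncard : ℝ)}
      ≤ 64 * C₀ ^ 3 / (n : ℝ) ^ s := by
  have ha1 : (1 : ℝ) < a := by rw [ha]; linarith
  have ha0 : (0 : ℝ) < a := by linarith
  have hnpos : (0 : ℝ) < n := by exact_mod_cast hn
  have hp0 : (0 : ℝ) ≤ c / n := by positivity
  have hp1 : c / (n : ℝ) ≤ 1 := by rw [div_le_one hnpos]; exact hcn
  have hC₀0 : 0 < C₀ := by rw [hC₀]; positivity
  set p : ℝ := c / n with hp
  set Kf : ℕ → ℕ := fun t => ⌊a * t⌋₊ + 1 with hKf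
  set F : ℕ → ℝ := fun t => if 3 ≤ t then ((t ^ 2).choose (Kf t) : ℝ) * p ^ (Kf t) else 0
    with hF
  have hFnonneg : ∀ t, 0 ≤ F t := by
    intro t
    rw [hF]
    dsimp only
    split
    · positivity
    · exact le_rfl
  set FT : Finset (Finset (Fin n)) :=
    Finset.univ.filter (fun T => (T.card : ℝ) ≤ δ * n) with hFT
  set sFor : Finset (Fin n) → Finset (Finset (Sym2 (Fin n))) :=
    fun T => (pairsIn T).powerset.filter (fun S => S.card = Kf T.card) with hsFor
  have h1 : erProb n p {G : SimpleGraph (Fin n) | ∃ T : Set (Fin n),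
        (T.ncard : ℝ) ≤ δ * n ∧ a * T.ncard < ((G.induce T).edgeSet.ncard : ℝ)}
      ≤ ∑ T ∈ FT, erProb n p (⋃ S ∈ sFor T, {G : SimpleGraph (Fin n) | ↑S ⊆ G.edgeSet}) :=
    erProb_le_sum hp0 hp1 FT _ (bad_subset δ a (le_of_lt ha0) Kf (fun t => rfl))
  have h2 : ∀ T ∈ FT, erProb n p (⋃ S ∈ sFor T, {G : SimpleGraph (Fin n) | ↑S ⊆ G.edgeSet})
      ≤ ((pairsIn T).card.choose (Kf T.card) : ℝ) * p ^ (Kf T.card) := by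
    intro T _
    have hu := erProb_le_sum hp0 hp1 (sFor T)
      (fun S => {G : SimpleGraph (Fin n) | ↑S ⊆ G.edgeSet}) subset_rfl
    have heq : ∀ S ∈ sFor T, erProb n p {G : SimpleGraph (Fin n) | ↑S ⊆ G.edgeSet}
        = p ^ (Kf T.card) := by
      intro S hS
      rw [hsFor] at hS
      simp only [Finset.mem_filter, Finset.mem_powerset] at hS
      rw [erProb_edges p S (fun e he => pairsIn_subset_top T (hS.1 he)), hS.2]
    calc erProb n p (⋃ S ∈ sFor T, {G : SimpleGraph (Fin n) | ↑S ⊆ G.edgeSet})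
        ≤ ∑ S ∈ sFor T, erProb n p {G : SimpleGraph (Fin n) | ↑S ⊆ G.edgeSet} := hu
    _ = ∑ _S ∈ sFor T, p ^ (Kf T.card) := Finset.sum_congr rfl heq
    _ = ((sFor T).card : ℝ) * p ^ (Kf T.card) := by
        rw [Finset.sum_const, nsmul_eq_mul]
    _ = ((pairsIn T).card.choose (Kf T.card) : ℝ) * p ^ (Kf T.card) := by
        simp only [hsFor]
        have hps : (Finset.filter (fun S => S.card = Kf T.card) (pairsIn T).powerset)
            = Finset.powersetCard (Kf T.card) (pairsIn T) :=
          (Finset.powersetCard_eq_filter).symm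
        rw [hps, Finset.card_powersetCard]
  have h3 : ∀ T ∈ FT, ((pairsIn T).card.choose (Kf T.card) : ℝ) * p ^ (Kf T.card)
      ≤ F T.card := by
    intro T _
    by_cases h3t : 3 ≤ T.card
    · rw [hF]
      dsimp only
      rw [if_pos h3t]
      apply mul_le_mul_of_nonneg_right _ (by positivity)
      exact_mod_cast Nat.choose_le_choose (Kf T.card) (card_pairsIn_le T)
    · have hzero : (pairsIn T).card.choose (Kf T.card) = 0 := by
        apply Nat.choose_eq_zero_of_lt
        by_cases h1t : T.card ≤ 1
        · rw [pairsIn_eq_empty h1t]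
          simp [hKf]
        · have h2t : T.card = 2 := by omega
          have hm := pairsIn_card_small (le_of_eq h2t)
          have hK2 : 2 ≤ Kf T.card := by
            rw [hKf]
            dsimp only
            have : 1 ≤ ⌊a * (T.card : ℕ)⌋₊ := by
              apply Nat.le_floor
              rw [h2t]
              push_cast
              nlinarith
            omega
          omega
      rw [hzero]
      simpa using hFnonneg T.card
  have h4 : erProb n p {G : SimpleGraph (Fin n) | ∃ T : Set (Fin n),
        (T.ncard : ℝ) ≤ δ * n ∧ a * T.ncard < ((G.induce T).edgeSet.ncard : ℝ)}
      ≤ ∑ T ∈ FT, F T.card :=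
    le_trans h1 (Finset.sum_le_sum fun T hT => le_trans (h2 T hT) (h3 T hT))
  have hcardu : (Finset.univ : Finset (Fin n)).card = n := by simp
  have h5 : ∑ T ∈ FT, F T.card
      = ∑ t ∈ Finset.range (n + 1),
          (n.choose t : ℝ) * (if (t : ℝ) ≤ δ * n then F t else 0) := by
    calc ∑ T ∈ FT, F T.card
        = ∑ T ∈ (Finset.univ : Finset (Fin n)).powerset,
            (if ((T.card : ℝ)) ≤ δ * n then F T.card else 0) := by
          rw [Finset.powerset_univ, hFT, Finset.sum_filter]
    _ = ∑ t ∈ Finset.range (n + 1), ∑ T ∈ Finset.powersetCard t (Finset.univ : Finset (Fin n)),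
          (if ((T.card : ℝ)) ≤ δ * n then F T.card else 0) := by
          rw [Finset.powerset_card_disjiUnion]
          exact (Finset.sum_disjiUnion _ _ _).trans (by rw [hcardu])
    _ = ∑ t ∈ Finset.range (n + 1),
          (n.choose t : ℝ) * (if (t : ℝ) ≤ δ * n then F t else 0) := by
          refine Finset.sum_congr rfl fun t _ => ?_
          have hconst : ∀ T ∈ Finset.powersetCard t (Finset.univ : Finset (Fin n)),
              (if ((T.card : ℝ)) ≤ δ * n then F T.card else 0)
                = (if (t : ℝ) ≤ δ * n then F t else 0) := by
            intro T hT
            rw [(Finset.mem_powersetCard.1 hT).2]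
          rw [Finset.sum_congr rfl hconst, Finset.sum_const, Finset.card_powersetCard,
            hcardu, nsmul_eq_mul]
  have h6 : ∀ t ∈ Finset.range (n + 1),
      (n.choose t : ℝ) * (if (t : ℝ) ≤ δ * n then F t else 0)
        ≤ (8 * C₀ ^ 3 / (n : ℝ) ^ s) * ((t : ℝ) * (1 / 2) ^ t) := by
    intro t _
    have hRHS : 0 ≤ (8 * C₀ ^ 3 / (n : ℝ) ^ s) * ((t : ℝ) * (1 / 2) ^ t) := by positivity
    by_cases hc1 : (t : ℝ) ≤ δ * n
    · rw [if_pos hc1]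
      by_cases hc2 : 3 ≤ t
      · rw [hF]
        dsimp only
        rw [if_pos hc2]
        have hKt : a * t ≤ ((Kf t : ℕ) : ℝ) := by
          rw [hKf]
          push_cast
          exact le_of_lt (Nat.lt_floor_add_one (a * t))
        have htb := term_bound hc hε ha hC₀ hδ0 hδa hδhalf hδ1 hs hn hc2 hc1 hKt
        calc (n.choose t : ℝ) * (((t ^ 2).choose (Kf t) : ℝ) * p ^ (Kf t))
            = (n.choose t : ℝ) * ((t ^ 2).choose (Kf t) : ℝ) * (c / n) ^ (Kf t) := by
              rw [hp, mul_assoc]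
        _ ≤ 8 * C₀ ^ 3 * ((t : ℝ) / (n : ℝ) ^ s) * (1 / 2) ^ t := htb
        _ = (8 * C₀ ^ 3 / (n : ℝ) ^ s) * ((t : ℝ) * (1 / 2) ^ t) := by ring
      · rw [hF]
        dsimp only
        rw [if_neg hc2, mul_zero]
        exact hRHS
    · rw [if_neg hc1, mul_zero]
      exact hRHS
  calc erProb n p {G : SimpleGraph (Fin n) | ∃ T : Set (Fin n),
        (T.ncard : ℝ) ≤ δ * n ∧ a * T.ncard < ((G.induce T).edgeSet.ncard : ℝ)}
      ≤ ∑ T ∈ FT, F T.card := h4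
  _ = ∑ t ∈ Finset.range (n + 1),
        (n.choose t : ℝ) * (if (t : ℝ) ≤ δ * n then F t else 0) := h5
  _ ≤ ∑ t ∈ Finset.range (n + 1),
        (8 * C₀ ^ 3 / (n : ℝ) ^ s) * ((t : ℝ) * (1 / 2) ^ t) :=
      Finset.sum_le_sum h6
  _ = (8 * C₀ ^ 3 / (n : ℝ) ^ s) * ∑ t ∈ Finset.range (n + 1), (t : ℝ) * (1 / 2) ^ t := by
      rw [Finset.mul_sum]
  _ ≤ (8 * C₀ ^ 3 / (n : ℝ) ^ s) * 8 := by
      apply mul_le_mul_of_nonneg_left (sum_t_half_le (n + 1)) (by positivity)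
  _ = 64 * C₀ ^ 3 / (n : ℝ) ^ s := by ring

/-- For every `c > 0` and `ε > 0` there exists `δ > 0` such that whp the
random graph `G ∈ 𝒢(n, c/n)` has the property that every vertex set `T` with `|T| ≤ δ n`
spans at most `(1 + ε/3)|T|` edges. -/
theorem er_sparse_sets_whp (c ε : ℝ) (hc : 0 < c) (hε : 0 < ε) :
    ∃ δ > (0 : ℝ), Tendsto (fun n : ℕ =>
      erProb n (c / n) {G | ∀ T : Set (Fin n), (T.ncard : ℝ) ≤ δ * n →
        ((G.induce T).edgeSet.ncard : ℝ) ≤ (1 + ε / 3) * T.ncard})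
      atTop (nhds 1) := by
  classical
  set a : ℝ := 1 + ε / 3 with ha
  have ha1 : 1 < a := by rw [ha]; linarith
  have ha0 : 0 < a := by linarith
  set C₀ : ℝ := 3 * (3 * c / a) ^ a with hC₀
  have hC₀0 : 0 < C₀ := by rw [hC₀]; positivity
  set δ : ℝ := min (a / (3 * c)) (min 1 ((1 / (2 * C₀)) ^ ((3 : ℝ) / ε))) with hδ
  have hδ0 : 0 < δ := by
    rw [hδ]
    exact lt_min (by positivity) (lt_min one_pos (by positivity))
  have hδa : 3 * c * δ ≤ a := by
    have h := min_le_left (a / (3 * c)) (min 1 ((1 / (2 * C₀)) ^ ((3 : ℝ) / ε)))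
    rw [← hδ, le_div_iff₀ (by positivity)] at h
    linarith
  have hδ1 : δ ≤ 1 := le_trans (min_le_right _ _) (min_le_left _ _)
  have hδhalf : C₀ * δ ^ (ε / 3) ≤ 1 / 2 := by
    have h1 : δ ≤ (1 / (2 * C₀)) ^ ((3 : ℝ) / ε) :=
      le_trans (min_le_right _ _) (min_le_right _ _)
    have h2 : δ ^ (ε / 3) ≤ ((1 / (2 * C₀)) ^ ((3 : ℝ) / ε)) ^ (ε / 3) :=
      Real.rpow_le_rpow (le_of_lt hδ0) h1 (by positivity)
    have h3 : ((1 / (2 * C₀)) ^ ((3 : ℝ) / ε)) ^ (ε / 3) = 1 / (2 * C₀) := by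
      rw [← Real.rpow_mul (by positivity)]
      rw [show (3 : ℝ) / ε * (ε / 3) = 1 by field_simp]
      exact Real.rpow_one _
    calc C₀ * δ ^ (ε / 3) ≤ C₀ * (1 / (2 * C₀)) := by
          rw [← h3]
          exact mul_le_mul_of_nonneg_left h2 (le_of_lt hC₀0)
    _ = 1 / 2 := by
          rw [mul_one_div, div_eq_div_iff (by positivity) (by norm_num)]
          ring
  set s : ℝ := min ε 1 with hs
  have hs0 : 0 < s := lt_min hε one_pos
  refine ⟨δ, hδ0, ?_⟩
  have hB0 : Tendsto (fun n : ℕ => 64 * C₀ ^ 3 / (n : ℝ) ^ s) atTop (nhds 0) := by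
    have h1 : Tendsto (fun n : ℕ => ((n : ℝ)) ^ s) atTop atTop :=
      (tendsto_rpow_atTop hs0).comp tendsto_natCast_atTop_atTop
    have h2 := h1.inv_tendsto_atTop
    have h3 := h2.const_mul (64 * C₀ ^ 3)
    rw [mul_zero] at h3
    refine h3.congr fun n => ?_
    simp [div_eq_mul_inv]
  have hlow : Tendsto (fun n : ℕ => 1 - 64 * C₀ ^ 3 / (n : ℝ) ^ s) atTop (nhds 1) := by
    have h4 := (tendsto_const_nhds :
      Tendsto (fun _ : ℕ => (1 : ℝ)) atTop (nhds 1)).sub hB0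
    simpa using h4
  refine tendsto_of_tendsto_of_tendsto_of_le_of_le' hlow tendsto_const_nhds ?_ ?_
  · -- eventually 1 - Bn ≤ erProb good
    filter_upwards [eventually_ge_atTop 1, eventually_ge_atTop ⌈c⌉₊] with n hn1 hnc
    have hcn : c ≤ (n : ℝ) := le_trans (Nat.le_ceil c) (by exact_mod_cast hnc)
    have hnpos : (0 : ℝ) < n := by exact_mod_cast hn1
    have hp0 : (0 : ℝ) ≤ c / n := by positivity
    have hp1 : c / (n : ℝ) ≤ 1 := by rw [div_le_one hnpos]; exact hcn
    have hcompl : {G : SimpleGraph (Fin n) | ∀ T : Set (Fin n), (T.ncard : ℝ) ≤ δ * n →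
          ((G.induce T).edgeSet.ncard : ℝ) ≤ (1 + ε / 3) * T.ncard}ᶜ
        = {G : SimpleGraph (Fin n) | ∃ T : Set (Fin n), (T.ncard : ℝ) ≤ δ * n ∧
          a * T.ncard < ((G.induce T).edgeSet.ncard : ℝ)} := by
      ext G
      simp only [Set.mem_compl_iff, Set.mem_setOf_eq, not_forall, ha]
      push_neg
      simp only [exists_prop]
    have hm := master hc hε ha hC₀ hδ0 hδa hδhalf hδ1 hs n hn1 hcn
    have hadd := erProb_add_compl (n := n) (c / n)
      {G : SimpleGraph (Fin n) | ∀ T : Set (Fin n), (T.ncard : ℝ) ≤ δ * n →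
        ((G.induce T).edgeSet.ncard : ℝ) ≤ (1 + ε / 3) * T.ncard}
    rw [hcompl] at hadd
    linarith
  · filter_upwards [eventually_ge_atTop 1, eventually_ge_atTop ⌈c⌉₊] with n hn1 hnc
    have hcn : c ≤ (n : ℝ) := le_trans (Nat.le_ceil c) (by exact_mod_cast hnc)
    have hnpos : (0 : ℝ) < n := by exact_mod_cast hn1
    exact erProb_le_one (by positivity) (by rw [div_le_one hnpos]; exact hcn) _
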